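/- Let m > 1 be squarefree, let p_1 < ⋯ < p_t be primes congruent to 1 mod m with m < p_1 and p_t < 2p_1, and let m̄_1 be the product p_1⋯p_t, multiplied additionally by a prime q > 2p_1 if t is odd (so that μ(m̄_1) = 1). Then c(m̄_1 m, k) = a(m_1 m, k) for all k < 2p_1, where m_1 is the corresponding product with μ(m_1) = -1; equivalently, 1/Φ_{m̄_1 m}(x) ≡ (1/Φ_m(x))·(1 - μ(m)(x^{p_1} + ⋯ + x^{p_t})) (mod x^{2p_1}) as formal power series. -/

import Mathlib

open Polynomial ArithmeticFunction

theorem cyclotomic_inv_coeff_eq_cyclotomic_coeff (m t : ℕ) (hm : 1 < m) (hsf : Squarefree m)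
    (ht : 0 < t) (p : Fin t → ℕ) (hmono : StrictMono p)
    (hprime : ∀ i, (p i).Prime) (hcong : ∀ i, p i ≡ 1 [MOD m])
    (hlow : m < p ⟨0, ht⟩) (hhigh : p ⟨t - 1, by omega⟩ < 2 * p ⟨0, ht⟩)
    (q : ℕ) (hq : q.Prime) (hq2 : 2 * p ⟨0, ht⟩ < q)
    (m₁ : ℕ) (hm₁ : m₁ = if Even t then (∏ i, p i) * q else ∏ i, p i)
    (mbar₁ : ℕ) (hmbar₁ : mbar₁ = if Odd t then (∏ i, p i) * q else ∏ i, p i)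
    (g : PowerSeries ℤ) (hg : (cyclotomic (mbar₁ * m) ℤ : PowerSeries ℤ) * g = 1)
    (k : ℕ) (hk : k < 2 * p ⟨0, ht⟩) :
    PowerSeries.coeff k g = (cyclotomic (m₁ * m) ℤ).coeff k := by
  set N := 2 * p ⟨0, ht⟩ with hN
  set P := ∏ i, p i with hP
  set n := P * m with hn
  -- every p i is less than N
  have hpi_lt : ∀ i, p i < N := by
    intro i
    have h1 : p i ≤ p ⟨t - 1, by omega⟩ := by
      apply hmono.monotone
      rw [Fin.le_def]
      simp
      omega
    omega
  -- q does not divide n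
  have hqn : ¬ q ∣ n := by
    rintro hdvd
    rcases (Nat.Prime.dvd_mul hq).mp hdvd with h | h
    · obtain ⟨i, -, hi⟩ := hq.prime.exists_mem_finset_dvd h
      have := (Nat.prime_dvd_prime_iff_eq hq (hprime i)).mp hi
      have := hpi_lt i
      omega
    · have := Nat.le_of_dvd (by omega) h
      have : m < p ⟨0, ht⟩ := hlow
      omega
  have hPpos : 0 < P := Finset.prod_pos fun i _ => (hprime i).pos
  have hn2 : 1 < n := by
    have : 1 * 1 < P * m := by
      apply Nat.mul_lt_mul_of_le_of_lt hPpos hm hPpos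
    simpa using this
  -- key polynomial identity
  have hexp : expand ℤ q (cyclotomic n ℤ) = cyclotomic (n * q) ℤ * cyclotomic n ℤ :=
    cyclotomic_expand_eq_cyclotomic_mul hq hqn ℤ
  -- the product of the two cyclotomics is expand q (cyclotomic n)
  have hprod : cyclotomic (mbar₁ * m) ℤ * cyclotomic (m₁ * m) ℤ =
      expand ℤ q (cyclotomic n ℤ) := by
    rcases Nat.even_or_odd t with he | ho
    · have h1 : m₁ = P * q := by rw [hm₁, if_pos he]
      have h2 : mbar₁ = P := by rw [hmbar₁, if_neg (Nat.not_odd_iff_even.mpr he)]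
      have : m₁ * m = n * q := by rw [h1, hn]; ring
      rw [this, h2, ← hn, hexp, mul_comm]
    · have h1 : m₁ = P := by rw [hm₁, if_neg (Nat.not_even_iff_odd.mpr ho)]
      have h2 : mbar₁ = P * q := by rw [hmbar₁, if_pos ho]
      have : mbar₁ * m = n * q := by rw [h2, hn]; ring
      rw [this, h1, ← hn, hexp]
  -- coefficients of expand q (cyclotomic n) below N
  have hE : ∀ j < N, (expand ℤ q (cyclotomic n ℤ)).coeff j =
      ((1 : Polynomial ℤ)).coeff j := by
    intro j hj
    rw [Polynomial.coeff_expand hq.pos]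
    rcases Nat.eq_zero_or_pos j with rfl | hjpos
    · simp [cyclotomic_coeff_zero ℤ hn2]
    · have hndvd : ¬ q ∣ j := by
        intro hd
        have := Nat.le_of_dvd hjpos hd
        omega
      rw [if_neg hndvd, Polynomial.coeff_one, if_neg (by omega)]
  -- pass to power series
  set E : PowerSeries ℤ := ((expand ℤ q (cyclotomic n ℤ) : Polynomial ℤ) : PowerSeries ℤ)
    with hEdef
  have hdvd1 : (PowerSeries.X : PowerSeries ℤ) ^ N ∣ (1 - E) := by
    rw [PowerSeries.X_pow_dvd_iff]
    intro j hj
    simp only [map_sub, hEdef, Polynomial.coeff_coe]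
    have := hE j hj
    rw [this]
    rcases Nat.eq_zero_or_pos j with rfl | hjpos
    · simp
    · rw [PowerSeries.coeff_one, Polynomial.coeff_one, if_neg (by omega)]
      simp
  have hgsub : g - ((cyclotomic (m₁ * m) ℤ : Polynomial ℤ) : PowerSeries ℤ) = g * (1 - E) := by
    have hEeq : E = (cyclotomic (mbar₁ * m) ℤ : PowerSeries ℤ) *
        ((cyclotomic (m₁ * m) ℤ : Polynomial ℤ) : PowerSeries ℤ) := by
      rw [hEdef, ← hprod, Polynomial.coe_mul]
    rw [hEeq, mul_sub, mul_one]
    have : g * ((cyclotomic (mbar₁ * m) ℤ : PowerSeries ℤ) *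
        ((cyclotomic (m₁ * m) ℤ : Polynomial ℤ) : PowerSeries ℤ)) =
        ((cyclotomic (mbar₁ * m) ℤ : PowerSeries ℤ) * g) *
        ((cyclotomic (m₁ * m) ℤ : Polynomial ℤ) : PowerSeries ℤ) := by ring
    rw [this, hg, one_mul]
  have hdvd2 : (PowerSeries.X : PowerSeries ℤ) ^ N ∣
      (g - ((cyclotomic (m₁ * m) ℤ : Polynomial ℤ) : PowerSeries ℤ)) := by
    rw [hgsub]
    exact Dvd.dvd.mul_left hdvd1 g
  have := (PowerSeries.X_pow_dvd_iff.mp hdvd2) k hk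
  rw [map_sub] at this
  have h2 : PowerSeries.coeff k ((cyclotomic (m₁ * m) ℤ : Polynomial ℤ) : PowerSeries ℤ) =
      (cyclotomic (m₁ * m) ℤ).coeff k := Polynomial.coeff_coe _ _
  omega
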